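/- arXiv:2505.08152 — 3 statements merged into one kernel-verified Lean document; each statement's English description precedes it below -/
import Mathlib

section
/- Decay along the normalized gradient flow under a Łojasiewicz inequality: let U ⊆ ℝ^l be open and f : U → ℝ continuously differentiable, and suppose there exist γ ∈ (0, 1) and K ≥ 2 such that |f(y)|^{1−γ} ≤ K‖∇f(y)‖ for all y ∈ U. Let t₀ > 0 and b ∈ U with f(b) > 0, and let v : [0, t₀] → U be a differentiable curve with v(0) = b such that for every t ∈ [0, t₀]: if f(v(t)) > f(b)/2 then v′(t) = −∇f(v(t))/‖∇f(v(t))‖, and otherwise v′(t) = 0. Then for every t ∈ [0, t₀] with t ≤ f(b)^γ/2 one has f(v(t)) − f(b) ≤ −(1/(2K)) · t · f(b)^{1−γ}. -/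
open MeasureTheory

/-- **Decay along the normalized gradient flow under a Łojasiewicz inequality.**
Let `U ⊆ ℝ^l` be open and `f : U → ℝ` continuously differentiable, satisfying the
Łojasiewicz inequality `|f(y)|^{1−γ} ≤ K‖∇f(y)‖` on `U` with `γ ∈ (0,1)` and `K ≥ 2`.
If `v` is the normalized gradient flow of `f` starting at `b ∈ U` with `f(b) > 0`,
truncated once the value drops to `f(b)/2`, then for every `t ∈ [0, t₀]` with
`t ≤ f(b)^γ/2` one has `f(v(t)) − f(b) ≤ −(1/(2K))·t·f(b)^{1−γ}`. -/
theorem gradient_flow_decay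
    (l : ℕ) (U : Set (EuclideanSpace ℝ (Fin l))) (hU : IsOpen U)
    (f : EuclideanSpace ℝ (Fin l) → ℝ) (hf : ContDiffOn ℝ 1 f U)
    (γ K : ℝ) (hγ : γ ∈ Set.Ioo (0 : ℝ) 1) (hK : 2 ≤ K)
    (hLoj : ∀ y ∈ U, |f y| ^ (1 - γ) ≤ K * ‖gradient f y‖)
    (t₀ : ℝ) (ht₀ : 0 < t₀)
    (b : EuclideanSpace ℝ (Fin l)) (hb : b ∈ U) (hfb : 0 < f b)
    (v v' : ℝ → EuclideanSpace ℝ (Fin l))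
    (hv0 : v 0 = b) (hvU : ∀ t ∈ Set.Icc (0 : ℝ) t₀, v t ∈ U)
    (hderiv : ∀ t ∈ Set.Icc (0 : ℝ) t₀, HasDerivAt v (v' t) t)
    (hflow : ∀ t ∈ Set.Icc (0 : ℝ) t₀,
      (f (v t) > f b / 2 → v' t = -(‖gradient f (v t)‖⁻¹) • gradient f (v t)) ∧
      (¬ f (v t) > f b / 2 → v' t = 0)) :
    ∀ t ∈ Set.Icc (0 : ℝ) t₀, t ≤ f b ^ γ / 2 →
      f (v t) - f b ≤ -(1 / (2 * K)) * t * f b ^ (1 - γ) := by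
  obtain ⟨hγ0, hγ1⟩ := hγ
  have hK0 : (0:ℝ) < K := by linarith
  have hfb1γ : (0:ℝ) < f b ^ (1-γ) := Real.rpow_pos_of_pos hfb _
  set c : ℝ := f b ^ (1-γ) / (2*K) with hc
  have hc0 : 0 < c := div_pos hfb1γ (by linarith)
  -- derivative of g := f ∘ v
  have hgd : ∀ s ∈ Set.Icc (0:ℝ) t₀,
      HasDerivAt (fun u => f (v u)) ((inner ℝ (gradient f (v s)) (v' s) : ℝ)) s := by
    intro s hs
    have hdf : DifferentiableAt ℝ f (v s) :=
      (hf.contDiffAt (hU.mem_nhds (hvU s hs))).differentiableAt one_ne_zero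
    have h1 := hdf.hasGradientAt
    rw [hasGradientAt_iff_hasFDerivAt] at h1
    have := h1.comp_hasDerivAt s (hderiv s hs)
    simp only [InnerProductSpace.toDual_apply_apply] at this; exact this
  have hDval : ∀ s ∈ Set.Icc (0:ℝ) t₀,
      (inner ℝ (gradient f (v s)) (v' s) : ℝ) ≤ 0 ∧
      (f (v s) > f b / 2 → (inner ℝ (gradient f (v s)) (v' s) : ℝ) ≤ -c) := by
    intro s hs
    by_cases hcase : f (v s) > f b / 2
    · have hv' := (hflow s hs).1 hcase
      have hfvs : 0 < f (v s) := by linarith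
      have hgradpos : 0 < ‖gradient f (v s)‖ := by
        rcases (norm_nonneg (gradient f (v s))).lt_or_eq with h | h
        · exact h
        · exfalso
          have hL := hLoj (v s) (hvU s hs)
          rw [← h] at hL
          have : (0:ℝ) < |f (v s)| ^ (1-γ) :=
            Real.rpow_pos_of_pos (abs_pos.mpr (ne_of_gt hfvs)) _
          nlinarith
      have hval : (inner ℝ (gradient f (v s)) (v' s) : ℝ) = -‖gradient f (v s)‖ := by
        rw [hv', real_inner_smul_right, real_inner_self_eq_norm_sq]
        field_simp
      have hbound : c ≤ ‖gradient f (v s)‖ := by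
        have hL := hLoj (v s) (hvU s hs)
        have habs : |f (v s)| = f (v s) := abs_of_pos hfvs
        have h1 : (f b / 2) ^ (1-γ) ≤ |f (v s)| ^ (1-γ) := by
          apply Real.rpow_le_rpow (by linarith) (by rw [habs]; linarith) (by linarith)
        have h2 : (f b / 2) ^ (1-γ) = f b ^ (1-γ) / 2 ^ (1-γ) :=
          Real.div_rpow hfb.le (by norm_num : (0:ℝ) ≤ 2) _
        have h3 : (2:ℝ) ^ (1-γ) ≤ 2 := by
          calc (2:ℝ) ^ (1-γ) ≤ 2 ^ (1:ℝ) :=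
                Real.rpow_le_rpow_of_exponent_le (by norm_num) (by linarith)
            _ = 2 := Real.rpow_one 2
        have h2pos : (0:ℝ) < 2 ^ (1-γ) := Real.rpow_pos_of_pos (by norm_num) _
        have h4 : f b ^ (1-γ) / 2 ≤ f b ^ (1-γ) / 2 ^ (1-γ) :=
          div_le_div_of_nonneg_left hfb1γ.le h2pos h3
        have h5 : f b ^ (1-γ) / 2 ≤ K * ‖gradient f (v s)‖ := by
          calc f b ^ (1-γ) / 2 ≤ (f b / 2) ^ (1-γ) := by rw [h2]; exact h4
            _ ≤ |f (v s)| ^ (1-γ) := h1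
            _ ≤ K * ‖gradient f (v s)‖ := hL
        rw [hc, div_le_iff₀ (by linarith : (0:ℝ) < 2*K)]
        nlinarith
      constructor
      · rw [hval]; linarith
      · intro _; rw [hval]; linarith
    · have hv' := (hflow s hs).2 hcase
      rw [hv', inner_zero_right]
      exact ⟨le_rfl, fun h => absurd h hcase⟩
  -- g is antitone on [0, t₀]
  have hanti : AntitoneOn (fun u => f (v u)) (Set.Icc 0 t₀) := by
    apply antitoneOn_of_deriv_nonpos (convex_Icc _ _)
    · exact fun s hs => (hgd s hs).continuousAt.continuousWithinAt
    · intro x hx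
      rw [interior_Icc] at hx
      exact ((hgd x ⟨hx.1.le, hx.2.le⟩).differentiableAt).differentiableWithinAt
    · intro x hx
      rw [interior_Icc] at hx
      have hx' : x ∈ Set.Icc (0:ℝ) t₀ := ⟨hx.1.le, hx.2.le⟩
      rw [(hgd x hx').deriv]
      exact (hDval x hx').1
  intro t ht htle
  have ht0 : (0:ℝ) ≤ t := ht.1
  have hsub : Set.Icc (0:ℝ) t ⊆ Set.Icc 0 t₀ := Set.Icc_subset_Icc le_rfl ht.2
  by_cases hall : ∀ s ∈ Set.Icc (0:ℝ) t, f b / 2 < f (v s)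
  · -- never stopped: mean value on h(u) = f(v u) + c u
    have hhd : ∀ s ∈ Set.Icc (0:ℝ) t, HasDerivAt (fun u => f (v u) + c * u)
        ((inner ℝ (gradient f (v s)) (v' s) : ℝ) + c) s := by
      intro s hs
      have := (hgd s (hsub hs)).add ((hasDerivAt_id s).const_mul c)
      rw [mul_one] at this; exact this
    have hanti2 : AntitoneOn (fun u => f (v u) + c * u) (Set.Icc 0 t) := by
      apply antitoneOn_of_deriv_nonpos (convex_Icc _ _)
      · exact fun s hs => (hhd s hs).continuousAt.continuousWithinAt
      · intro x hx
        rw [interior_Icc] at hx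
        exact ((hhd x ⟨hx.1.le, hx.2.le⟩).differentiableAt).differentiableWithinAt
      · intro x hx
        rw [interior_Icc] at hx
        have hx' : x ∈ Set.Icc (0:ℝ) t := ⟨hx.1.le, hx.2.le⟩
        rw [(hhd x hx').deriv]
        have := (hDval x (hsub hx')).2 (hall x hx')
        linarith
    have hle := hanti2 (Set.left_mem_Icc.mpr ht0) (Set.right_mem_Icc.mpr ht0) ht0
    simp only [mul_zero, add_zero, hv0] at hle
    have heq : -(1 / (2 * K)) * t * f b ^ (1-γ) = -(c * t) := by
      rw [hc]; field_simp
    rw [heq]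
    linarith
  · -- stopped at some s ≤ t: use monotonicity and c·t ≤ f b / 2
    push_neg at hall
    obtain ⟨s, hs, hsle⟩ := hall
    have hts : f (v t) ≤ f (v s) := hanti (hsub hs) ht hs.2
    have hdec : f (v t) ≤ f b / 2 := le_trans hts hsle
    have hγpos : (0:ℝ) < f b ^ γ := Real.rpow_pos_of_pos hfb _
    have hmul : f b ^ γ * f b ^ (1-γ) = f b := by
      rw [← Real.rpow_add hfb]
      norm_num
    have h1 : t * f b ^ (1-γ) ≤ f b / 2 := by nlinarith
    have h1' : 0 ≤ t * f b ^ (1-γ) := mul_nonneg ht0 hfb1γ.le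
    have h3 : t * f b ^ (1-γ) / (2*K) ≤ (f b / 2) / (2*K) := by
      gcongr
    have h4 : (f b / 2) / (2*K) ≤ f b / 2 :=
      div_le_self (by linarith) (by linarith)
    have heq : -(1 / (2 * K)) * t * f b ^ (1-γ) = -(t * f b ^ (1-γ) / (2*K)) := by
      ring
    rw [heq]
    linarith
end

section
/- Monotonicity and energy identity along the truncated normalized gradient flow: let U ⊆ ℝ^l be open, f : U → ℝ continuously differentiable, t₀ > 0, b ∈ U, and c < f(b). Let v : [0, t₀] → U be a differentiable curve with v(0) = b such that for every t ∈ [0, t₀]: if f(v(t)) > c then ∇f(v(t)) ≠ 0 and v′(t) = −∇f(v(t))/‖∇f(v(t))‖, and otherwise v′(t) = 0. Then the function t ↦ f(v(t)) is nonincreasing on [0, t₀]; moreover, for every t ∈ [0, t₀] such that f(v(s)) > c for all s ∈ [0, t), one has f(v(t)) − f(b) = −∫₀^t ‖∇f(v(s))‖ ds. -/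
open MeasureTheory

/-- **Monotonicity and energy identity along the truncated normalized gradient flow.**
Let `U ⊆ ℝ^l` be open, `f : U → ℝ` continuously differentiable, `t₀ > 0`, `b ∈ U`, and
`c < f(b)`. Let `v : [0, t₀] → U` be the normalized gradient flow of `f` starting at `b`,
truncated once the value drops to `c`. Then `t ↦ f(v(t))` is nonincreasing on `[0, t₀]`,
and for every `t ∈ [0, t₀]` such that `f(v(s)) > c` for all `s ∈ [0, t)` one has
`f(v(t)) − f(b) = −∫₀^t ‖∇f(v(s))‖ ds`. -/
theorem gradient_flow_monotone_and_energy_identity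
    (l : ℕ) (U : Set (EuclideanSpace ℝ (Fin l))) (hU : IsOpen U)
    (f : EuclideanSpace ℝ (Fin l) → ℝ) (hf : ContDiffOn ℝ 1 f U)
    (t₀ : ℝ) (ht₀ : 0 < t₀)
    (b : EuclideanSpace ℝ (Fin l)) (hb : b ∈ U)
    (c : ℝ) (hc : c < f b)
    (v v' : ℝ → EuclideanSpace ℝ (Fin l))
    (hv0 : v 0 = b) (hvU : ∀ t ∈ Set.Icc (0 : ℝ) t₀, v t ∈ U)
    (hderiv : ∀ t ∈ Set.Icc (0 : ℝ) t₀, HasDerivAt v (v' t) t)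
    (hflow : ∀ t ∈ Set.Icc (0 : ℝ) t₀,
      (f (v t) > c → gradient f (v t) ≠ 0 ∧
        v' t = -(‖gradient f (v t)‖⁻¹) • gradient f (v t)) ∧
      (¬ f (v t) > c → v' t = 0)) :
    AntitoneOn (fun t => f (v t)) (Set.Icc 0 t₀) ∧
    ∀ t ∈ Set.Icc (0 : ℝ) t₀, (∀ s ∈ Set.Ico (0 : ℝ) t, c < f (v s)) →
      f (v t) - f b = -∫ s in (0 : ℝ)..t, ‖gradient f (v s)‖ := by
  -- derivative of `f ∘ v`
  have hgrad : ∀ t ∈ Set.Icc (0 : ℝ) t₀, HasGradientAt f (gradient f (v t)) (v t) := by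
    intro t ht
    exact ((hf.differentiableOn one_ne_zero).differentiableAt
      (hU.mem_nhds (hvU t ht))).hasGradientAt
  have hcomp : ∀ t ∈ Set.Icc (0 : ℝ) t₀,
      HasDerivAt (fun t => f (v t))
        (inner ℝ (gradient f (v t)) (v' t) : ℝ) t := by
    intro t ht
    have := ((hgrad t ht).hasFDerivAt.comp_hasDerivAt t (hderiv t ht))
    simp only [InnerProductSpace.toDual_apply_apply] at this
    exact this
  -- the value of the derivative
  have hval : ∀ t ∈ Set.Icc (0 : ℝ) t₀, f (v t) > c →
      (inner ℝ (gradient f (v t)) (v' t) : ℝ) = -‖gradient f (v t)‖ := by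
    intro t ht hgt
    obtain ⟨hne, hv'⟩ := (hflow t ht).1 hgt
    rw [hv', real_inner_smul_right, real_inner_self_eq_norm_sq]
    have hpos : (0:ℝ) < ‖gradient f (v t)‖ := norm_pos_iff.2 hne
    field_simp
  have hnonpos : ∀ t ∈ Set.Icc (0 : ℝ) t₀,
      (inner ℝ (gradient f (v t)) (v' t) : ℝ) ≤ 0 := by
    intro t ht
    by_cases hgt : f (v t) > c
    · rw [hval t ht hgt]; exact neg_nonpos.2 (norm_nonneg _)
    · rw [(hflow t ht).2 hgt, inner_zero_right]
  have hcont : ContinuousOn (fun t => f (v t)) (Set.Icc 0 t₀) := fun t ht =>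
    (hcomp t ht).continuousAt.continuousWithinAt
  -- continuity of the gradient along v
  have hcg : ContinuousOn (fun s => ‖gradient f (v s)‖) (Set.Icc 0 t₀) := by
    have h1 : ContinuousOn (fderiv ℝ f) U :=
      hf.continuousOn_fderiv_of_isOpen hU le_rfl
    have h2 : ContinuousOn (gradient f) U := by
      have := ((InnerProductSpace.toDual ℝ
        (EuclideanSpace ℝ (Fin l))).symm.continuous.comp_continuousOn h1)
      exact this
    have hvcont : ContinuousOn v (Set.Icc 0 t₀) := fun t ht =>
      (hderiv t ht).continuousAt.continuousWithinAt
    exact (h2.comp hvcont hvU).norm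
  constructor
  · -- monotonicity
    apply antitoneOn_of_deriv_nonpos (convex_Icc 0 t₀) hcont
    · intro x hx
      rw [interior_Icc] at hx
      exact ((hcomp x (Set.mem_Icc_of_Ioo hx)).differentiableAt).differentiableWithinAt
    · intro x hx
      rw [interior_Icc] at hx
      rw [(hcomp x (Set.mem_Icc_of_Ioo hx)).deriv]
      exact hnonpos x (Set.mem_Icc_of_Ioo hx)
  · intro t ht hlt
    have h0t : (0:ℝ) ≤ t := ht.1
    have hsub : Set.Icc (0:ℝ) t ⊆ Set.Icc 0 t₀ :=
      Set.Icc_subset_Icc le_rfl ht.2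
    have key : (∫ s in (0:ℝ)..t, -‖gradient f (v s)‖) = f (v t) - f (v 0) := by
      apply intervalIntegral.integral_eq_sub_of_hasDeriv_right_of_le h0t
        (hcont.mono hsub)
      · intro x hx
        have hx' : x ∈ Set.Icc (0:ℝ) t₀ := hsub ⟨le_of_lt hx.1, le_of_lt hx.2⟩
        have hgt := hlt x ⟨le_of_lt hx.1, hx.2⟩
        have := (hcomp x hx')
        rw [hval x hx' hgt] at this
        exact this.hasDerivWithinAt
      · apply ContinuousOn.intervalIntegrable
        rw [Set.uIcc_of_le h0t]
        exact ((hcg.mono hsub).neg)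
    rw [hv0, intervalIntegral.integral_neg] at key
    linarith
end

section
/- Logarithmic decay from the epiperimetric differential inequality: let n ≥ 3, ε ∈ (0, 1), γ ∈ (0, 1), and ρ̃ > 0. Let e : (0, ρ̃) → ℝ be nonnegative and differentiable, set f(ρ) := ρ^{n−2} e(ρ), and assume that f is monotone nondecreasing on (0, ρ̃) and that f(ρ) ≤ (1 − ε e(ρ)^γ) (ρ/(n−2)) f′(ρ) for every ρ ∈ (0, ρ̃). Then e(ρ) ≤ ((n−2) ε γ log(ρ̃/ρ))^{−1/γ} for every ρ ∈ (0, ρ̃). -/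
/-- If `F` is monotone on an open interval and differentiable at an interior point,
its derivative there is nonnegative. -/
lemma aux_deriv_nonneg_of_monotoneOn {F : ℝ → ℝ} {a b σ d : ℝ}
    (hσ : σ ∈ Set.Ioo a b) (hm : MonotoneOn F (Set.Ioo a b)) (hd : HasDerivAt F d σ) :
    0 ≤ d := by
  have ht : Filter.Tendsto (slope F σ) (nhdsWithin σ (Set.Ioi σ)) (nhds d) :=
    (hasDerivAt_iff_tendsto_slope.1 hd).mono_left
      (nhdsWithin_mono σ (fun y hy => ne_of_gt hy))
  refine ge_of_tendsto ht ?_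
  filter_upwards [Ioo_mem_nhdsGT_of_mem ⟨le_refl σ, hσ.2⟩] with y hy
  have hyI : y ∈ Set.Ioo a b := ⟨hσ.1.trans hy.1, hy.2⟩
  rw [slope_def_field]
  exact div_nonneg (sub_nonneg.2 (hm hσ hyI hy.1.le)) (sub_nonneg.2 hy.1.le)

set_option maxHeartbeats 1000000 in
/-- **Logarithmic decay from the epiperimetric differential inequality.**
Let `n ≥ 3`, `ε, γ ∈ (0,1)`, `ρ̃ > 0`. Let `e : (0, ρ̃) → ℝ` be nonnegative and
differentiable, `f(ρ) := ρ^{n−2} e(ρ)` monotone nondecreasing, and suppose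
`f(ρ) ≤ (1 − ε e(ρ)^γ)(ρ/(n−2)) f′(ρ)` on `(0, ρ̃)`. Then
`e(ρ) ≤ ((n−2) ε γ log(ρ̃/ρ))^{−1/γ}` on `(0, ρ̃)`. -/
theorem log_decay_of_epiperimetric_diff_ineq
    (n : ℕ) (hn : 3 ≤ n) (ε γ ρt : ℝ)
    (hε : ε ∈ Set.Ioo (0 : ℝ) 1) (hγ : γ ∈ Set.Ioo (0 : ℝ) 1) (hρt : 0 < ρt)
    (e : ℝ → ℝ)
    (he : ∀ ρ ∈ Set.Ioo (0 : ℝ) ρt, 0 ≤ e ρ)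
    (hediff : ∀ ρ ∈ Set.Ioo (0 : ℝ) ρt, DifferentiableAt ℝ e ρ)
    (hmono : MonotoneOn (fun ρ => ρ ^ (n - 2) * e ρ) (Set.Ioo 0 ρt))
    (hineq : ∀ ρ ∈ Set.Ioo (0 : ℝ) ρt,
      ρ ^ (n - 2) * e ρ ≤
        (1 - ε * e ρ ^ γ) * (ρ / ((n : ℝ) - 2)) *
          deriv (fun r => r ^ (n - 2) * e r) ρ) :
    ∀ ρ ∈ Set.Ioo (0 : ℝ) ρt,
      e ρ ≤ (((n : ℝ) - 2) * ε * γ * Real.log (ρt / ρ)) ^ (-(1 / γ)) := by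
  intro ρ hρ
  obtain ⟨hρ0, hρρt⟩ := hρ
  set m : ℝ := (n : ℝ) - 2 with hm_def
  have hm1 : (1 : ℝ) ≤ m := by
    have : (3 : ℝ) ≤ (n : ℝ) := by exact_mod_cast hn
    simp only [hm_def]; linarith
  have hm0 : 0 < m := lt_of_lt_of_le one_pos hm1
  have hε0 := hε.1
  have hγ0 := hγ.1
  have hγ1 := hγ.2
  -- positivity of the RHS base
  have hlogpos : 0 < Real.log (ρt / ρ) :=
    Real.log_pos ((one_lt_div hρ0).2 hρρt)
  have hbase : 0 < m * ε * γ * Real.log (ρt / ρ) :=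
    mul_pos (mul_pos (mul_pos hm0 hε0) hγ0) hlogpos
  rcases (he ρ ⟨hρ0, hρρt⟩).eq_or_lt with hA0 | hA0
  · -- trivial case `e ρ = 0`
    rw [← hA0]
    exact le_of_lt (Real.rpow_pos_of_pos hbase _)
  -- main case `e ρ > 0`
  -- positivity of `e` on `[ρ, ρt)`
  have epos : ∀ σ ∈ Set.Ico ρ ρt, 0 < e σ := by
    intro σ hσ
    have hσI : σ ∈ Set.Ioo (0 : ℝ) ρt := ⟨lt_of_lt_of_le hρ0 hσ.1, hσ.2⟩
    have hf : ρ ^ (n - 2) * e ρ ≤ σ ^ (n - 2) * e σ :=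
      hmono ⟨hρ0, hρρt⟩ hσI hσ.1
    have h1 : 0 < ρ ^ (n - 2) * e ρ := mul_pos (pow_pos hρ0 _) hA0
    have h2 : 0 < σ ^ (n - 2) * e σ := lt_of_lt_of_le h1 hf
    have hσ0 : (0 : ℝ) < σ := lt_of_lt_of_le hρ0 hσ.1
    nlinarith [pow_pos hσ0 (n - 2)]
  -- auxiliary function h
  set h : ℝ → ℝ := fun r => e r ^ (-γ) + m * ε * γ * Real.log r with hh_def
  -- derivative of h at points of `Ico ρ ρt`
  have hD : ∀ σ ∈ Set.Ico ρ ρt,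
      HasDerivAt h (deriv e σ * (-γ) * e σ ^ (-γ - 1) + m * ε * γ * σ⁻¹) σ := by
    intro σ hσ
    have hσ0 : (0 : ℝ) < σ := lt_of_lt_of_le hρ0 hσ.1
    have hσI : σ ∈ Set.Ioo (0 : ℝ) ρt := ⟨hσ0, hσ.2⟩
    have hde : HasDerivAt e (deriv e σ) σ := (hediff σ hσI).hasDerivAt
    have h1 : HasDerivAt (fun r => e r ^ (-γ))
        (deriv e σ * (-γ) * e σ ^ (-γ - 1)) σ :=
      hde.rpow_const (Or.inl (ne_of_gt (epos σ hσ)))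
    have h2 : HasDerivAt (fun r => m * ε * γ * Real.log r) (m * ε * γ * σ⁻¹) σ :=
      (Real.hasDerivAt_log (ne_of_gt hσ0)).const_mul (m * ε * γ)
    exact h1.add h2
  -- the derivative is nonpositive on the interior
  have hDle : ∀ σ ∈ Set.Ioo ρ ρt,
      deriv e σ * (-γ) * e σ ^ (-γ - 1) + m * ε * γ * σ⁻¹ ≤ 0 := by
    intro σ hσ
    have hσ0 : (0 : ℝ) < σ := lt_trans hρ0 hσ.1
    have hσI : σ ∈ Set.Ioo (0 : ℝ) ρt := ⟨hσ0, hσ.2⟩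
    set A : ℝ := e σ with hA_def
    have hApos : 0 < A := epos σ ⟨hσ.1.le, hσ.2⟩
    set E : ℝ := deriv e σ with hE_def
    -- derivative of F
    have hFd : HasDerivAt (fun r => r ^ (n - 2) * e r)
        ((↑(n - 2) * σ ^ (n - 2 - 1)) * e σ + σ ^ (n - 2) * E) σ :=
      (hasDerivAt_pow (n - 2) σ).mul (hediff σ hσI).hasDerivAt
    have hcast : ((n - 2 : ℕ) : ℝ) = m := by
      have : (2 : ℕ) ≤ n := by omega
      push_cast [Nat.cast_sub this]; ring
    have hn321 : n - 2 - 1 = n - 3 := by omega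
    have hn23 : n - 2 = (n - 3) + 1 := by omega
    have heq : (↑(n - 2) * σ ^ (n - 2 - 1)) * e σ + σ ^ (n - 2) * E
        = σ ^ (n - 3) * (m * A + σ * E) := by
      rw [hcast, hn321, hn23, pow_succ]
      ring
    have hFval : deriv (fun r => r ^ (n - 2) * e r) σ
        = σ ^ (n - 3) * (m * A + σ * E) := hFd.deriv.trans heq
    have hF0 : 0 ≤ σ ^ (n - 3) * (m * A + σ * E) := by
      rw [← heq]
      exact aux_deriv_nonneg_of_monotoneOn hσI hmono hFd
    have hP : 0 ≤ m * A + σ * E := by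
      nlinarith [pow_pos hσ0 (n - 3)]
    set t : ℝ := ε * A ^ γ with ht_def
    have htpos : 0 < t := mul_pos hε0 (Real.rpow_pos_of_pos hApos γ)
    -- key inequality: m*A ≤ (1-t)*(m*A + σ*E)
    have hkey : m * A ≤ (1 - t) * (m * A + σ * E) := by
      have hi := hineq σ hσI
      rw [hFval] at hi
      have hc : 0 < σ ^ (n - 3) * σ := mul_pos (pow_pos hσ0 _) hσ0
      have hσpow : σ ^ (n - 2) = σ ^ (n - 3) * σ := by rw [hn23, pow_succ]
      rw [hσpow] at hi
      have hre : (1 - t) * (σ / m) * (σ ^ (n - 3) * (m * A + σ * E))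
          = (σ ^ (n - 3) * σ) * ((1 - t) * (m * A + σ * E) / m) := by
        field_simp
      rw [hre] at hi
      have hAle : A ≤ (1 - t) * (m * A + σ * E) / m :=
        le_of_mul_le_mul_left hi hc
      rw [le_div_iff₀ hm0] at hAle
      linarith [hAle]
    have hmApos : 0 < m * A := mul_pos hm0 hApos
    have hPpos : 0 < m * A + σ * E := by
      rcases hP.eq_or_lt with hPe | hPe
      · nlinarith
      · exact hPe
    have hσE : 0 ≤ σ * E := by nlinarith [mul_pos htpos hPpos]
    -- from the key inequality: ε * A^γ * m * A ≤ σ * E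
    have hEbound : ε * A ^ γ * m * A ≤ σ * E := by
      have h1 : t * (m * A + σ * E) ≤ σ * E := by nlinarith
      nlinarith [mul_nonneg htpos.le hσE]
    -- conclude
    have hBA : A ^ (-γ - 1) = (A ^ γ * A)⁻¹ := by
      rw [show -γ - 1 = -(γ + 1) by ring, Real.rpow_neg hApos.le,
        Real.rpow_add hApos, Real.rpow_one]
    rw [hBA]
    set B : ℝ := A ^ γ with hB_def
    have hBpos : 0 < B := Real.rpow_pos_of_pos hApos γ
    have h1 : m * ε * σ⁻¹ ≤ E * (B * A)⁻¹ := by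
      have heq : ε * B * m * A / σ * (B * A)⁻¹ = m * ε * σ⁻¹ := by
        field_simp
      have hstep : ε * B * m * A / σ ≤ E := by
        rw [div_le_iff₀ hσ0]
        nlinarith [hEbound]
      calc m * ε * σ⁻¹ = ε * B * m * A / σ * (B * A)⁻¹ := heq.symm
        _ ≤ E * (B * A)⁻¹ := by
            exact mul_le_mul_of_nonneg_right hstep
              (inv_nonneg.2 (mul_nonneg hBpos.le hApos.le))
    nlinarith [mul_le_mul_of_nonneg_left h1 hγ0.le]
  -- h is antitone on `Ico ρ ρt`
  have hanti : AntitoneOn h (Set.Ico ρ ρt) := by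
    apply antitoneOn_of_deriv_nonpos (convex_Ico ρ ρt)
    · intro σ hσ
      exact ((hD σ hσ).differentiableAt.continuousAt).continuousWithinAt
    · rw [interior_Ico]
      intro σ hσ
      exact ((hD σ ⟨hσ.1.le, hσ.2⟩).differentiableAt).differentiableWithinAt
    · rw [interior_Ico]
      intro σ hσ
      rw [(hD σ ⟨hσ.1.le, hσ.2⟩).deriv]
      exact hDle σ hσ
  -- for σ ∈ (ρ, ρt): m*ε*γ*log σ ≤ e ρ^(-γ) + m*ε*γ*log ρ
  have hbound : ∀ σ ∈ Set.Ioo ρ ρt,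
      m * ε * γ * Real.log σ ≤ e ρ ^ (-γ) + m * ε * γ * Real.log ρ := by
    intro σ hσ
    have h1 : h σ ≤ h ρ := hanti ⟨le_refl ρ, hρρt⟩ ⟨hσ.1.le, hσ.2⟩ hσ.1.le
    have h2 : 0 < e σ ^ (-γ) :=
      Real.rpow_pos_of_pos (epos σ ⟨hσ.1.le, hσ.2⟩) _
    simp only [hh_def] at h1
    linarith
  -- take the limit σ → ρt⁻
  have hlim : m * ε * γ * Real.log ρt ≤ e ρ ^ (-γ) + m * ε * γ * Real.log ρ := by
    have htend : Filter.Tendsto (fun σ => m * ε * γ * Real.log σ)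
        (nhdsWithin ρt (Set.Iio ρt)) (nhds (m * ε * γ * Real.log ρt)) :=
      ((continuousAt_const.mul (Real.continuousAt_log hρt.ne')).tendsto).mono_left
        nhdsWithin_le_nhds
    refine le_of_tendsto htend ?_
    filter_upwards [Ioo_mem_nhdsLT_of_mem (⟨hρρt, le_refl ρt⟩ : ρt ∈ Set.Ioc ρ ρt)]
      with σ hσ using hbound σ hσ
  -- conclude
  have hL : m * ε * γ * Real.log (ρt / ρ) ≤ e ρ ^ (-γ) := by
    rw [Real.log_div hρt.ne' hρ0.ne']
    linarith
  have hexp : (e ρ ^ (-γ)) ^ (-(1 / γ)) = e ρ := by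
    have h1 : -γ * -(1 / γ) = 1 := by field_simp
    rw [← Real.rpow_mul hA0.le, h1, Real.rpow_one]
  calc e ρ = (e ρ ^ (-γ)) ^ (-(1 / γ)) := hexp.symm
    _ ≤ (m * ε * γ * Real.log (ρt / ρ)) ^ (-(1 / γ)) :=
        Real.rpow_le_rpow_of_nonpos hbase hL
          (neg_nonpos.2 (le_of_lt (div_pos one_pos hγ0)))
end
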